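/- Let (T,<_T,<_lex) be a lexicographically ordered Aronszajn tree. The following are equivalent: (a) (T,<_T,<_lex) is weakly bi-entangled; (b) for every normal family B ⊆ [T]² and every type t : 2 → {<,>} there are a,b ∈ B with ht(a) < ht(b) and tp⊥(a,b) = t; (c) for every uncountable pairwise disjoint separated family A ⊆ [T]² and every type t : 2 → {<,>} there are a,b ∈ A with max(ht(a(0)),ht(a(1))) < min(ht(b(0)),ht(b(1))) and tp⊥(a,b) = t. -/

import Mathlib

noncomputable section

open Set

/-- The ordinal `ω₁`. -/
def omega1 : Ordinal := (Cardinal.aleph 1).ord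

/-- A set-theoretic tree: a partial order in which the set of predecessors of every
node is well-ordered by the order. -/
def IsSetTree (T : Type) [PartialOrder T] : Prop :=
  ∀ t : T, IsWellOrder {s : T // s < t} (fun a b => (a : T) < (b : T))

/-- The height of a node: the order type of its set of predecessors. -/
noncomputable def nodeHt {T : Type} [PartialOrder T] (hT : IsSetTree T) (t : T) : Ordinal :=
  @Ordinal.type {s : T // s < t} (fun a b => (a : T) < (b : T)) (hT t)

-- `restr hT t ξ` is the unique `s ≤ t` of height `ξ` (junk value `t` if there is none).
open Classical in
noncomputable def restr {T : Type} [PartialOrder T] (hT : IsSetTree T) (t : T) (ξ : Ordinal) : T :=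
  if h : ∃ s : T, s ≤ t ∧ nodeHt hT s = ξ then h.choose else t

/-- Incomparability in the tree order. -/
def Incomp {T : Type} [PartialOrder T] (s t : T) : Prop := ¬ s ≤ t ∧ ¬ t ≤ s

/-- `Δ(s,t)`: the least `α` such that `s↾α ≠ t↾α`. -/
noncomputable def delta {T : Type} [PartialOrder T] (hT : IsSetTree T) (s t : T) : Ordinal :=
  sInf {α : Ordinal | restr hT s α ≠ restr hT t α}

/-- A family of linear orders on the levels of the tree, coded as a single relation
relating only nodes of the same height. -/
def IsLevelOrderFamily {T : Type} [PartialOrder T] (hT : IsSetTree T) (lo : T → T → Prop) : Prop :=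
  (∀ s t, lo s t → nodeHt hT s = nodeHt hT t) ∧
  (∀ t, ¬ lo t t) ∧
  (∀ s t u, lo s t → lo t u → lo s u) ∧
  (∀ s t, s ≠ t → nodeHt hT s = nodeHt hT t → lo s t ∨ lo t s)

/-- The lexicographic ordering induced by the level orders `lo`:
`t <lex s` iff `t <_T s`, or `t ⊥ s` and `t↾Δ(t,s) ◁ s↾Δ(t,s)`. -/
def lexLT {T : Type} [PartialOrder T] (hT : IsSetTree T) (lo : T → T → Prop) (t s : T) : Prop :=
  t < s ∨ (Incomp t s ∧ lo (restr hT t (delta hT t s)) (restr hT s (delta hT t s)))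

/-- An `ω₁`-tree: height `ω₁` and all levels countable. -/
def IsOmega1Tree {T : Type} [PartialOrder T] (hT : IsSetTree T) : Prop :=
  (∀ t : T, nodeHt hT t < omega1) ∧
  (∀ α : Ordinal, α < omega1 → ∃ t : T, nodeHt hT t = α) ∧
  (∀ α : Ordinal, {t : T | nodeHt hT t = α}.Countable)

def NoUncountableChain (T : Type) [PartialOrder T] : Prop :=
  ∀ C : Set T, IsChain (· ≤ ·) C → C.Countable

def NoUncountableAntichain (T : Type) [PartialOrder T] : Prop :=
  ∀ A : Set T, (∀ s ∈ A, ∀ t ∈ A, s ≠ t → Incomp s t) → A.Countable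

/-- An Aronszajn tree: an `ω₁`-tree with no uncountable chains. -/
def IsAronszajnTree {T : Type} [PartialOrder T] (hT : IsSetTree T) : Prop :=
  IsOmega1Tree hT ∧ NoUncountableChain T

/-- A Suslin tree: an `ω₁`-tree with no uncountable chains and no uncountable antichains. -/
def IsSuslinTree {T : Type} [PartialOrder T] (hT : IsSetTree T) : Prop :=
  IsOmega1Tree hT ∧ NoUncountableChain T ∧ NoUncountableAntichain T

/-- A family of pairs is pairwise disjoint if distinct members are disjoint as sets. -/
def PairwiseDisjointPairs {T : Type} (A : Set (T × T)) : Prop :=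
  ∀ a ∈ A, ∀ b ∈ A, a ≠ b → a.1 ≠ b.1 ∧ a.1 ≠ b.2 ∧ a.2 ≠ b.1 ∧ a.2 ≠ b.2

/-- A family of pairs is separated if some `c` lies strictly between the coordinates
of every member. -/
def SeparatedPairs {T : Type} (lt : T → T → Prop) (A : Set (T × T)) : Prop :=
  ∃ c : T, ∀ a ∈ A, lt a.1 c ∧ lt c a.2

/-- `tpPerp hT lo a b t`: the pair `(a,b)` realizes the type `t` in the lexicographic
order and moreover `a i ⊥ b i` in the tree order, for `i < 2`. (`true` codes `<`.) -/
def tpPerp {T : Type} [PartialOrder T] (hT : IsSetTree T) (lo : T → T → Prop)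
    (a b : T × T) (t : Fin 2 → Bool) : Prop :=
  Incomp a.1 b.1 ∧ Incomp a.2 b.2 ∧
  (if t 0 then lexLT hT lo a.1 b.1 else lexLT hT lo b.1 a.1) ∧
  (if t 1 then lexLT hT lo a.2 b.2 else lexLT hT lo b.2 a.2)

/-- The weakly bi-entangled property of a lexicographically ordered tree. -/
def WeaklyBiEntangled {T : Type} [PartialOrder T] (hT : IsSetTree T) (lo : T → T → Prop) : Prop :=
  ∀ A : Set (T × T), ¬ A.Countable →
    (∀ a ∈ A, lexLT hT lo a.1 a.2) →
    PairwiseDisjointPairs A → SeparatedPairs (lexLT hT lo) A →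
    ∃ ξ₀ : Ordinal, ξ₀ < omega1 ∧
      ∀ b ∈ A, ξ₀ ≤ nodeHt hT b.1 → ξ₀ ≤ nodeHt hT b.2 →
        ∀ t : Fin 2 → Bool,
          ∃ a ∈ A, nodeHt hT a.1 < ξ₀ ∧ nodeHt hT a.2 < ξ₀ ∧ tpPerp hT lo a b t

/-- A normal family of pairs. -/
def NormalFamily {T : Type} [PartialOrder T] (hT : IsSetTree T) (lo : T → T → Prop)
    (B : Set (T × T)) : Prop :=
  ¬ B.Countable ∧
  (∀ b ∈ B, lexLT hT lo b.1 b.2) ∧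
  PairwiseDisjointPairs B ∧
  (∀ b ∈ B, nodeHt hT b.1 = nodeHt hT b.2) ∧
  BddAbove {α : Ordinal | ∃ b ∈ B, α = delta hT b.1 b.2} ∧
  sSup {α : Ordinal | ∃ b ∈ B, α = delta hT b.1 b.2} <
    sInf {α : Ordinal | ∃ b ∈ B, α = nodeHt hT b.1} ∧
  {α : Ordinal | ∃ b ∈ B, α = nodeHt hT b.1} =
    {α : Ordinal | sInf {α : Ordinal | ∃ b ∈ B, α = nodeHt hT b.1} ≤ α ∧ α < omega1}



section TreeLemmas

variable {T : Type} [PartialOrder T] (hT : IsSetTree T)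

/-- The height of `s < t` equals its `typein` within the predecessors of `t`. -/
theorem nodeHt_eq_typein {s t : T} (h : s < t) :
    nodeHt hT s = @Ordinal.typein {u : T // u < t} (fun a b => (a : T) < (b : T)) (hT t) ⟨s, h⟩ := by
  letI it := hT t
  letI is := hT s
  rw [← @Ordinal.type_subrel _ _ it ⟨s, h⟩]
  refine (@Ordinal.type_eq _ _ _ _ is _).2 ⟨?_⟩
  exact ⟨⟨fun u => ⟨⟨u.1, lt_trans u.2 h⟩, u.2⟩,
      fun b => ⟨b.1.1, b.2⟩, fun u => rfl, fun b => rfl⟩, Iff.rfl⟩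

theorem nodeHt_lt_of_lt {s t : T} (h : s < t) : nodeHt hT s < nodeHt hT t := by
  rw [nodeHt_eq_typein hT h]
  exact @Ordinal.typein_lt_type _ _ (hT t) _

theorem nodeHt_le_of_le {s t : T} (h : s ≤ t) : nodeHt hT s ≤ nodeHt hT t := by
  rcases eq_or_lt_of_le h with rfl | h
  · exact le_rfl
  · exact (nodeHt_lt_of_lt hT h).le

theorem exists_lt_of_lt_nodeHt {t : T} {ξ : Ordinal} (h : ξ < nodeHt hT t) :
    ∃ s : T, s < t ∧ nodeHt hT s = ξ := by
  letI := hT t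
  obtain ⟨⟨s, hs⟩, hs'⟩ := Ordinal.typein_surj (fun a b : {u : T // u < t} => (a : T) < (b : T)) h
  exact ⟨s, hs, (nodeHt_eq_typein hT hs).trans hs'⟩

theorem nodeHt_unique {s₁ s₂ t : T} (h₁ : s₁ ≤ t) (h₂ : s₂ ≤ t)
    (h : nodeHt hT s₁ = nodeHt hT s₂) : s₁ = s₂ := by
  letI := hT t
  rcases eq_or_lt_of_le h₁ with rfl | h₁
  · rcases eq_or_lt_of_le h₂ with rfl | h₂
    · rfl
    · exact absurd h.symm (ne_of_lt (nodeHt_lt_of_lt hT h₂))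
  · rcases eq_or_lt_of_le h₂ with rfl | h₂
    · exact absurd h (ne_of_lt (nodeHt_lt_of_lt hT h₁))
    · rw [nodeHt_eq_typein hT h₁, nodeHt_eq_typein hT h₂] at h
      have := (Ordinal.typein_inj (fun a b : {u : T // u < t} => (a : T) < (b : T))).1 h
      exact congrArg Subtype.val this

theorem restr_le (t : T) (ξ : Ordinal) : restr hT t ξ ≤ t := by
  rw [restr]
  split
  · next h => exact h.choose_spec.1
  · exact le_rfl

theorem nodeHt_restr {t : T} {ξ : Ordinal} (h : ξ ≤ nodeHt hT t) :
    nodeHt hT (restr hT t ξ) = ξ := by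
  have hex : ∃ s : T, s ≤ t ∧ nodeHt hT s = ξ := by
    rcases eq_or_lt_of_le h with rfl | h
    · exact ⟨t, le_rfl, rfl⟩
    · obtain ⟨s, hs, hs'⟩ := exists_lt_of_lt_nodeHt hT h
      exact ⟨s, hs.le, hs'⟩
  rw [restr, dif_pos hex]
  exact hex.choose_spec.2

theorem restr_eq_of_le {s t : T} {ξ : Ordinal} (h : s ≤ t) (hs : nodeHt hT s = ξ) :
    restr hT t ξ = s := by
  have hξ : ξ ≤ nodeHt hT t := hs ▸ nodeHt_le_of_le hT h
  exact nodeHt_unique hT (restr_le hT t ξ) h ((nodeHt_restr hT hξ).trans hs.symm)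

theorem restr_self (t : T) : restr hT t (nodeHt hT t) = t :=
  restr_eq_of_le hT le_rfl rfl

include hT in
theorem comparable_of_le {u v t : T} (hu : u ≤ t) (hv : v ≤ t) : u ≤ v ∨ v ≤ u := by
  rcases eq_or_lt_of_le hu with rfl | hu
  · exact Or.inr hv
  rcases eq_or_lt_of_le hv with rfl | hv
  · exact Or.inl hu.le
  haveI := hT t
  rcases trichotomous_of (fun a b : {s : T // s < t} => (a : T) < (b : T)) ⟨u, hu⟩ ⟨v, hv⟩ with h | h | h
  · exact Or.inl (le_of_lt h)
  · exact Or.inl (le_of_eq (congrArg Subtype.val h))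
  · exact Or.inr (le_of_lt h)

theorem restr_eq_restr {s t : T} {ξ : Ordinal} (h : s ≤ t) (hξ : ξ ≤ nodeHt hT s) :
    restr hT s ξ = restr hT t ξ :=
  ((restr_eq_of_le hT ((restr_le hT s ξ).trans h) (nodeHt_restr hT hξ))).symm

theorem restr_mono {t : T} {ξ ζ : Ordinal} (h : ξ ≤ ζ) (hζ : ζ ≤ nodeHt hT t) :
    restr hT t ξ ≤ restr hT t ζ := by
  rw [← restr_eq_restr hT (restr_le hT t ζ) (by rw [nodeHt_restr hT hζ]; exact h)]
  exact restr_le hT _ _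

end TreeLemmas

section DeltaLemmas

variable {T : Type} [PartialOrder T] (hT : IsSetTree T)

theorem incomp_symm {s t : T} (h : Incomp s t) : Incomp t s := ⟨h.2, h.1⟩

include hT in
theorem incomp_of_ne_of_nodeHt_eq {s t : T} (hne : s ≠ t) (h : nodeHt hT s = nodeHt hT t) :
    Incomp s t := by
  constructor
  · intro hle
    rcases eq_or_lt_of_le hle with rfl | hlt
    · exact hne rfl
    · exact absurd h (ne_of_lt (nodeHt_lt_of_lt hT hlt))
  · intro hle
    rcases eq_or_lt_of_le hle with rfl | hlt
    · exact hne rfl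
    · exact absurd h.symm (ne_of_lt (nodeHt_lt_of_lt hT hlt))

include hT in
theorem restr_ne_of_not_le {s t : T} (h : ¬ s ≤ t) :
    restr hT s (nodeHt hT s) ≠ restr hT t (nodeHt hT s) := by
  rw [restr_self hT]
  intro hst
  exact h (hst ▸ restr_le hT t (nodeHt hT s))

theorem delta_set_nonempty {s t : T} (h : Incomp s t) :
    {α : Ordinal | restr hT s α ≠ restr hT t α}.Nonempty :=
  ⟨nodeHt hT s, restr_ne_of_not_le hT h.1⟩

theorem delta_mem {s t : T} (h : Incomp s t) :
    restr hT s (delta hT s t) ≠ restr hT t (delta hT s t) :=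
  csInf_mem (delta_set_nonempty hT h)

theorem restr_eq_of_lt_delta {s t : T} {α : Ordinal} (h : α < delta hT s t) :
    restr hT s α = restr hT t α := by
  by_contra hne
  have : delta hT s t ≤ α := csInf_le (OrderBot.bddBelow _) hne
  exact absurd h (not_lt_of_ge this)

theorem delta_le_nodeHt {s t : T} (h : Incomp s t) : delta hT s t ≤ nodeHt hT s :=
  csInf_le (OrderBot.bddBelow _) (restr_ne_of_not_le hT h.1)

theorem delta_comm (s t : T) : delta hT s t = delta hT t s := by
  unfold delta
  congr 1
  ext α
  exact ne_comm

theorem delta_le_nodeHt' {s t : T} (h : Incomp s t) : delta hT s t ≤ nodeHt hT t := by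
  rw [delta_comm]
  exact delta_le_nodeHt hT (incomp_symm h)

/-- A helper to compute `delta`. -/
theorem delta_eq_of {s t : T} {δ : Ordinal} (h1 : restr hT s δ ≠ restr hT t δ)
    (h2 : ∀ α < δ, restr hT s α = restr hT t α) : delta hT s t = δ := by
  refine le_antisymm (csInf_le (OrderBot.bddBelow _) h1) (le_csInf ⟨δ, h1⟩ ?_)
  intro α hα
  by_contra hlt
  exact hα (h2 α (lt_of_not_ge hlt))

include hT in
theorem incomp_extend {s t σ τ : T} (h : Incomp s t) (hs : s ≤ σ) (ht : t ≤ τ) :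
    Incomp σ τ := by
  constructor
  · intro hle
    rcases comparable_of_le hT (hs.trans hle) ht with h' | h'
    · exact h.1 h'
    · exact h.2 h'
  · intro hle
    rcases comparable_of_le hT (ht.trans hle) hs with h' | h'
    · exact h.2 h'
    · exact h.1 h'

theorem delta_extend {s t σ τ : T} (h : Incomp s t) (hs : s ≤ σ) (ht : t ≤ τ) :
    delta hT σ τ = delta hT s t := by
  have hδs := delta_le_nodeHt hT h
  have hδt := delta_le_nodeHt' hT h
  refine delta_eq_of hT ?_ ?_
  · rw [← restr_eq_restr hT hs hδs, ← restr_eq_restr hT ht hδt]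
    exact delta_mem hT h
  · intro α hα
    rw [← restr_eq_restr hT hs (le_of_lt (lt_of_lt_of_le hα hδs)),
      ← restr_eq_restr hT ht (le_of_lt (lt_of_lt_of_le hα hδt))]
    exact restr_eq_of_lt_delta hT hα

theorem not_lt_of_incomp {s t : T} (h : Incomp s t) : ¬ s < t := fun h' => h.1 h'.le

theorem lexLT_of_incomp_delta {lo : T → T → Prop} {s t : T} (h : Incomp s t)
    (hlo : lo (restr hT s (delta hT s t)) (restr hT t (delta hT s t))) : lexLT hT lo s t :=
  Or.inr ⟨h, hlo⟩

theorem lo_of_lexLT_incomp {lo : T → T → Prop} {s t : T} (h : Incomp s t)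
    (hlex : lexLT hT lo s t) :
    lo (restr hT s (delta hT s t)) (restr hT t (delta hT s t)) := by
  rcases hlex with h' | h'
  · exact absurd h' (not_lt_of_incomp h)
  · exact h'.2

/-- Transfer of lexicographic relations to extensions, given incomparability below. -/
theorem lexLT_extend {lo : T → T → Prop} {s t σ τ : T} (h : Incomp s t)
    (hs : s ≤ σ) (ht : t ≤ τ) (hlex : lexLT hT lo s t) : lexLT hT lo σ τ := by
  have hδ : delta hT σ τ = delta hT s t := delta_extend hT h hs ht
  refine lexLT_of_incomp_delta hT (incomp_extend hT h hs ht) ?_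
  rw [hδ, ← restr_eq_restr hT hs (delta_le_nodeHt hT h),
    ← restr_eq_restr hT ht (delta_le_nodeHt' hT h)]
  exact lo_of_lexLT_incomp hT h hlex

theorem not_lexLT_self {lo : T → T → Prop} (t : T) : ¬ lexLT hT lo t t := by
  rintro (h | h)
  · exact lt_irrefl _ h
  · exact h.1.1 le_rfl

theorem tpPerp_extend {lo : T → T → Prop} {a b A B : T × T} {t : Fin 2 → Bool}
    (h : tpPerp hT lo a b t) (h1 : a.1 ≤ A.1) (h2 : a.2 ≤ A.2) (h3 : b.1 ≤ B.1)
    (h4 : b.2 ≤ B.2) : tpPerp hT lo A B t := by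
  obtain ⟨hi1, hi2, hl1, hl2⟩ := h
  refine ⟨incomp_extend hT hi1 h1 h3, incomp_extend hT hi2 h2 h4, ?_, ?_⟩
  · split
    · next ht => rw [if_pos ht] at hl1; exact lexLT_extend hT hi1 h1 h3 hl1
    · next ht => rw [if_neg ht] at hl1; exact lexLT_extend hT (incomp_symm hi1) h3 h1 hl1
  · split
    · next ht => rw [if_pos ht] at hl2; exact lexLT_extend hT hi2 h2 h4 hl2
    · next ht => rw [if_neg ht] at hl2; exact lexLT_extend hT (incomp_symm hi2) h4 h2 hl2

end DeltaLemmas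

section CountLemmas

universe u

theorem countable_Iio_ordinal {ξ : Ordinal.{u}} (h : ξ < omega1.{u}) :
    (Set.Iio ξ).Countable := by
  rw [Cardinal.countable_iff_lt_aleph_one, Ordinal.mk_Iio_ordinal,
    Cardinal.lift_lt_aleph_one]
  exact Cardinal.lt_ord.1 h

theorem not_countable_Iio_omega1 : ¬ (Set.Iio omega1.{u}).Countable := by
  rw [Cardinal.countable_iff_lt_aleph_one, Ordinal.mk_Iio_ordinal,
    Cardinal.lift_lt_aleph_one, omega1, Cardinal.card_ord]
  exact lt_irrefl _

theorem not_countable_Ico_omega1 {μ : Ordinal.{u}} (h : μ < omega1) :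
    ¬ (Set.Ico μ omega1).Countable := by
  intro hc
  apply not_countable_Iio_omega1
  have : Set.Iio omega1 ⊆ Set.Iio μ ∪ Set.Ico μ omega1 := by
    intro α hα
    rcases lt_or_ge α μ with h' | h'
    · exact Or.inl h'
    · exact Or.inr ⟨h', hα⟩
  exact Set.Countable.mono this ((countable_Iio_ordinal h).union hc)

/-- Pigeonhole: an uncountable set mapped into a countable set has an uncountable fiber. -/
theorem exists_uncountable_fiber {α β : Type*} {S : Set α} (hS : ¬ S.Countable)
    (f : α → β) {C : Set β} (hC : C.Countable) (hf : ∀ x ∈ S, f x ∈ C) :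
    ∃ c ∈ C, ¬ {x ∈ S | f x = c}.Countable := by
  by_contra hcon
  push_neg at hcon
  apply hS
  have : S ⊆ ⋃ c ∈ C, {x ∈ S | f x = c} := by
    intro x hx
    exact Set.mem_biUnion (hf x hx) ⟨hx, rfl⟩
  exact Set.Countable.mono this (Set.Countable.biUnion hC hcon)

variable {T : Type} [PartialOrder T] {hT : IsSetTree T}

theorem countable_nodes_ht_lt (h1 : IsOmega1Tree hT) {ξ : Ordinal} (hξ : ξ < omega1) :
    {t : T | nodeHt hT t < ξ}.Countable := by
  have : {t : T | nodeHt hT t < ξ} ⊆ ⋃ α ∈ Set.Iio ξ, {t : T | nodeHt hT t = α} := by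
    intro t ht
    exact Set.mem_biUnion ht rfl
  exact Set.Countable.mono this
    (Set.Countable.biUnion (countable_Iio_ordinal hξ) (fun α _ => h1.2.2 α))

theorem bsup_lt_omega1 {o : Ordinal.{u}} (ho : o < omega1.{u}) {f : ∀ a < o, Ordinal.{u}}
    (hf : ∀ i hi, f i hi < omega1) : Ordinal.bsup.{u,u} o f < omega1 := by
  apply Ordinal.bsup_lt_ord _ hf
  rw [omega1, Cardinal.isRegular_aleph_one.cof_eq]
  exact Cardinal.lt_ord.1 ho

end CountLemmas

section PairLemmas

variable {T : Type} [PartialOrder T] (hT : IsSetTree T) {lo : T → T → Prop}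

/-- Structure of a separated pair whose coordinates are higher than the separator. -/
theorem sep_pair_struct (hlo : IsLevelOrderFamily hT lo) {a1 a2 c : T}
    (hlex : lexLT hT lo a1 a2) (h1 : lexLT hT lo a1 c) (h2 : lexLT hT lo c a2)
    (hc1 : nodeHt hT c < nodeHt hT a1) (hc2 : nodeHt hT c < nodeHt hT a2) :
    Incomp a1 a2 ∧ delta hT a1 a2 ≤ nodeHt hT c := by
  obtain ⟨-, hirr, htrans, -⟩ := hlo
  have hic1 : Incomp a1 c ∧ lo (restr hT a1 (delta hT a1 c)) (restr hT c (delta hT a1 c)) := by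
    rcases h1 with h | h
    · exact absurd hc1 (not_lt_of_gt (nodeHt_lt_of_lt hT h))
    · exact h
  obtain ⟨hic1, hlo1⟩ := hic1
  set δ1 := delta hT a1 c with hδ1def
  have hδ1a : δ1 ≤ nodeHt hT a1 := delta_le_nodeHt hT hic1
  have hδ1c : δ1 ≤ nodeHt hT c := delta_le_nodeHt' hT hic1
  have hna : ¬ a2 ≤ a1 := by
    intro hle
    rcases hlex with h | h
    · exact absurd (le_of_lt h) (fun h' => absurd (le_antisymm h' hle) (ne_of_lt h))
    · exact h.1.2 hle
  -- main case analysis on `c` versus `a2`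
  rcases h2 with hca | ⟨hic2, hlo2⟩
  · -- c < a2
    have key : restr hT a2 δ1 = restr hT c δ1 :=
      (restr_eq_restr hT (le_of_lt hca) hδ1c).symm
    have hne12 : restr hT a1 δ1 ≠ restr hT a2 δ1 := by
      rw [key]; exact delta_mem hT hic1
    have hi : Incomp a1 a2 := by
      refine ⟨?_, hna⟩
      intro hle
      exact hne12 (restr_eq_restr hT hle hδ1a)
    exact ⟨hi, le_trans (csInf_le (OrderBot.bddBelow _) hne12) hδ1c⟩
  · set δ2 := delta hT c a2 with hδ2def
    have hδ2c : δ2 ≤ nodeHt hT c := delta_le_nodeHt hT hic2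
    have hδ2a : δ2 ≤ nodeHt hT a2 := delta_le_nodeHt' hT hic2
    have key : ∃ α, α ≤ nodeHt hT c ∧ restr hT a1 α ≠ restr hT a2 α := by
      rcases lt_trichotomy δ1 δ2 with h | h | h
      · refine ⟨δ1, hδ1c, ?_⟩
        rw [← restr_eq_of_lt_delta hT (show δ1 < delta hT c a2 from h)]
        exact delta_mem hT hic1
      · refine ⟨δ1, hδ1c, ?_⟩
        intro heq
        have h2' : restr hT c δ1 ≠ restr hT a2 δ1 := by
          rw [hδ2def] at h; rw [h]; exact delta_mem hT hic2
        rw [← h] at hlo2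
        have : lo (restr hT a1 δ1) (restr hT a2 δ1) := htrans _ _ _ hlo1 hlo2
        rw [heq] at this
        exact hirr _ this
      · refine ⟨δ2, hδ2c, ?_⟩
        rw [restr_eq_of_lt_delta hT (show δ2 < delta hT a1 c from h)]
        exact delta_mem hT hic2
    obtain ⟨α, hαc, hne⟩ := key
    have hi : Incomp a1 a2 := by
      refine ⟨?_, hna⟩
      intro hle
      exact hne (restr_eq_restr hT hle (le_trans hαc (le_of_lt hc1)))
    exact ⟨hi, le_trans (csInf_le (OrderBot.bddBelow _) hne) hαc⟩

end PairLemmas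

section RestrPair

variable {T : Type} [PartialOrder T] (hT : IsSetTree T) {lo : T → T → Prop}

theorem restr_pair {b1 b2 : T} {η : Ordinal} (hi : Incomp b1 b2)
    (hδ : delta hT b1 b2 < η) (h1 : η ≤ nodeHt hT b1) (h2 : η ≤ nodeHt hT b2) :
    nodeHt hT (restr hT b1 η) = η ∧ nodeHt hT (restr hT b2 η) = η ∧
    Incomp (restr hT b1 η) (restr hT b2 η) ∧
    delta hT (restr hT b1 η) (restr hT b2 η) = delta hT b1 b2 ∧
    (lo (restr hT b1 (delta hT b1 b2)) (restr hT b2 (delta hT b1 b2)) →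
      lexLT hT lo (restr hT b1 η) (restr hT b2 η)) := by
  set δ := delta hT b1 b2 with hδdef
  have ht1 := nodeHt_restr hT h1
  have ht2 := nodeHt_restr hT h2
  have e1 : ∀ α ≤ η, restr hT (restr hT b1 η) α = restr hT b1 α := fun α hα =>
    restr_eq_restr hT (restr_le hT b1 η) (by rw [ht1]; exact hα)
  have e2 : ∀ α ≤ η, restr hT (restr hT b2 η) α = restr hT b2 α := fun α hα =>
    restr_eq_restr hT (restr_le hT b2 η) (by rw [ht2]; exact hα)
  have hmem : restr hT (restr hT b1 η) δ ≠ restr hT (restr hT b2 η) δ := by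
    rw [e1 δ hδ.le, e2 δ hδ.le]
    exact delta_mem hT hi
  have hne : restr hT b1 η ≠ restr hT b2 η := fun h => hmem (by rw [h])
  have hinc : Incomp (restr hT b1 η) (restr hT b2 η) :=
    incomp_of_ne_of_nodeHt_eq hT hne (by rw [ht1, ht2])
  have hd : delta hT (restr hT b1 η) (restr hT b2 η) = δ := by
    refine delta_eq_of hT hmem ?_
    intro α hα
    rw [e1 α (le_of_lt (lt_trans hα hδ)), e2 α (le_of_lt (lt_trans hα hδ))]
    exact restr_eq_of_lt_delta hT hα
  refine ⟨ht1, ht2, hinc, hd, fun hlo => ?_⟩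
  refine lexLT_of_incomp_delta hT hinc ?_
  rw [hd, e1 δ hδ.le, e2 δ hδ.le]
  exact hlo

include hT in
theorem countable_fst_small (h1 : IsOmega1Tree hT) {A : Set (T × T)}
    (hA : PairwiseDisjointPairs A) {ξ : Ordinal} (hξ : ξ < omega1) :
    {b ∈ A | nodeHt hT b.1 < ξ}.Countable := by
  refine Set.MapsTo.countable_of_injOn (f := Prod.fst) (t := {t : T | nodeHt hT t < ξ})
    ?_ ?_ (countable_nodes_ht_lt h1 hξ)
  · intro b hb
    exact hb.2
  · intro b hb b' hb' hbb
    by_contra hne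
    exact (hA b hb.1 b' hb'.1 hne).1 hbb

include hT in
theorem countable_snd_small (h1 : IsOmega1Tree hT) {A : Set (T × T)}
    (hA : PairwiseDisjointPairs A) {ξ : Ordinal} (hξ : ξ < omega1) :
    {b ∈ A | nodeHt hT b.2 < ξ}.Countable := by
  refine Set.MapsTo.countable_of_injOn (f := Prod.snd) (t := {t : T | nodeHt hT t < ξ})
    ?_ ?_ (countable_nodes_ht_lt h1 hξ)
  · intro b hb
    exact hb.2
  · intro b hb b' hb' hbb
    by_contra hne
    exact (hA b hb.1 b' hb'.1 hne).2.2.2 hbb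

/-- Implication (a) → (c). -/
theorem impl_a_c (h1 : IsOmega1Tree hT) (hwbe : WeaklyBiEntangled hT lo) :
    ∀ A : Set (T × T), ¬ A.Countable →
      (∀ a ∈ A, lexLT hT lo a.1 a.2) →
      PairwiseDisjointPairs A → SeparatedPairs (lexLT hT lo) A →
      ∀ t : Fin 2 → Bool,
        ∃ a ∈ A, ∃ b ∈ A,
          max (nodeHt hT a.1) (nodeHt hT a.2) < min (nodeHt hT b.1) (nodeHt hT b.2) ∧
          tpPerp hT lo a b t := by
  intro A hAc hAlex hAd hAs t
  obtain ⟨ξ₀, hξ₀, hmain⟩ := hwbe A hAc hAlex hAd hAs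
  have hsmall : ¬ (A ⊆ {b ∈ A | nodeHt hT b.1 < ξ₀} ∪ {b ∈ A | nodeHt hT b.2 < ξ₀}) := by
    intro hsub
    exact hAc (Set.Countable.mono hsub
      ((countable_fst_small hT h1 hAd hξ₀).union (countable_snd_small hT h1 hAd hξ₀)))
  obtain ⟨b, hbA, hb⟩ : ∃ b ∈ A, ξ₀ ≤ nodeHt hT b.1 ∧ ξ₀ ≤ nodeHt hT b.2 := by
    rcases Set.not_subset.1 hsmall with ⟨b, hbA, hb⟩
    simp only [Set.mem_union, Set.mem_setOf_eq, not_or, not_and, not_lt] at hb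
    exact ⟨b, hbA, hb.1 hbA, hb.2 hbA⟩
  obtain ⟨a, haA, ha1, ha2, hperp⟩ := hmain b hbA hb.1 hb.2 t
  refine ⟨a, haA, b, hbA, ?_, hperp⟩
  exact lt_of_lt_of_le (max_lt ha1 ha2) (le_min hb.1 hb.2)

end RestrPair

section CtoB

variable {T : Type} [PartialOrder T] (hT : IsSetTree T) {lo : T → T → Prop}

theorem omega1_isLimit : Order.IsSuccLimit omega1 :=
  Cardinal.isSuccLimit_ord (le_of_lt Cardinal.aleph0_lt_aleph_one)

/-- Implication (c) → (b). -/
theorem impl_c_b (h1 : IsOmega1Tree hT)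
    (hc : ∀ A : Set (T × T), ¬ A.Countable →
      (∀ a ∈ A, lexLT hT lo a.1 a.2) →
      PairwiseDisjointPairs A → SeparatedPairs (lexLT hT lo) A →
      ∀ t : Fin 2 → Bool,
        ∃ a ∈ A, ∃ b ∈ A,
          max (nodeHt hT a.1) (nodeHt hT a.2) < min (nodeHt hT b.1) (nodeHt hT b.2) ∧
          tpPerp hT lo a b t) :
    ∀ B : Set (T × T), NormalFamily hT lo B → ∀ t : Fin 2 → Bool,
      ∃ a ∈ B, ∃ b ∈ B, nodeHt hT a.1 < nodeHt hT b.1 ∧ tpPerp hT lo a b t := by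
  intro B hB t
  obtain ⟨hBc, hBlex, hBd, hBht, hBdd, hBlt, hBeq⟩ := hB
  set ν := sInf {α : Ordinal | ∃ b ∈ B, α = nodeHt hT b.1} with hνdef
  set δs := sSup {α : Ordinal | ∃ b ∈ B, α = delta hT b.1 b.2} with hδsdef
  set σ := δs + 1 with hσdef
  have hν : ∀ b ∈ B, ν ≤ nodeHt hT b.1 := by
    intro b hb
    have : nodeHt hT b.1 ∈ {α : Ordinal | ∃ b ∈ B, α = nodeHt hT b.1} := ⟨b, hb, rfl⟩
    rw [hBeq] at this
    exact this.1
  have hpair : ∀ b ∈ B, Incomp b.1 b.2 ∧ delta hT b.1 b.2 ≤ δs := by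
    intro b hb
    have hne : b.1 ≠ b.2 := by
      intro h
      exact not_lexLT_self hT b.1 (by nth_rewrite 2 [h]; exact hBlex b hb)
    have hinc : Incomp b.1 b.2 := incomp_of_ne_of_nodeHt_eq hT hne (hBht b hb)
    exact ⟨hinc, le_csSup hBdd ⟨b, hb, rfl⟩⟩
  have hσν : σ ≤ ν := Order.succ_le_of_lt hBlt
  have hσω : σ < omega1 := by
    obtain ⟨b, hb⟩ : B.Nonempty := by
      rcases B.eq_empty_or_nonempty with h | h
      · exact absurd (by simp [h]) hBc
      · exact h
    exact lt_of_le_of_lt (le_trans hσν (hν b hb)) (h1.1 b.1)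
  -- restrict to pairs of height above σ
  set B₁ := {b ∈ B | σ < nodeHt hT b.1} with hB₁def
  have hB₁c : ¬ B₁.Countable := by
    intro hcnt
    apply hBc
    have hsub : B ⊆ B₁ ∪ {b ∈ B | nodeHt hT b.1 < σ + 1} := by
      intro b hb
      rcases lt_or_ge σ (nodeHt hT b.1) with h | h
      · exact Or.inl ⟨hb, h⟩
      · exact Or.inr ⟨hb, lt_of_le_of_lt h (lt_add_one _)⟩
    exact Set.Countable.mono hsub (hcnt.union
      (countable_fst_small hT h1 hBd (omega1_isLimit.succ_lt hσω)))
  -- project to level σ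
  have hproj : ∀ b ∈ B₁, (restr hT b.1 σ, restr hT b.2 σ) ∈
      {p : T × T | nodeHt hT p.1 = σ ∧ nodeHt hT p.2 = σ} := by
    rintro b ⟨hb, hσb⟩
    have h2 : σ ≤ nodeHt hT b.2 := by rw [← hBht b hb]; exact hσb.le
    exact ⟨nodeHt_restr hT hσb.le, nodeHt_restr hT h2⟩
  have hlevelc : {p : T × T | nodeHt hT p.1 = σ ∧ nodeHt hT p.2 = σ}.Countable := by
    have : {p : T × T | nodeHt hT p.1 = σ ∧ nodeHt hT p.2 = σ} ⊆
        {s : T | nodeHt hT s = σ} ×ˢ {s : T | nodeHt hT s = σ} := by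
      rintro ⟨x, y⟩ ⟨hx, hy⟩
      exact ⟨hx, hy⟩
    exact Set.Countable.mono this ((h1.2.2 σ).prod (h1.2.2 σ))
  obtain ⟨⟨u, v⟩, -, hB₂c⟩ := exists_uncountable_fiber hB₁c
    (fun b => (restr hT b.1 σ, restr hT b.2 σ)) hlevelc (fun b hb => hproj b hb)
  set B₂ := {b ∈ B₁ | (restr hT b.1 σ, restr hT b.2 σ) = (u, v)} with hB₂def
  have hB₂sub : B₂ ⊆ B := fun b hb => hb.1.1
  have hfib : ∀ b ∈ B₂, restr hT b.1 σ = u ∧ restr hT b.2 σ = v := by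
    rintro b ⟨-, hb⟩
    exact ⟨congrArg Prod.fst hb, congrArg Prod.snd hb⟩
  -- separatedness of B₂ via v
  have hsep : SeparatedPairs (lexLT hT lo) B₂ := by
    refine ⟨v, ?_⟩
    intro b hb2
    obtain ⟨hu, hv⟩ := hfib b hb2
    obtain ⟨⟨hbB, hσb⟩, -⟩ := hb2
    obtain ⟨hinc, hδb⟩ := hpair b hbB
    set δ := delta hT b.1 b.2 with hδdef
    have hδσ : δ < σ := lt_of_le_of_lt hδb (lt_add_one _)
    have hσ2 : σ ≤ nodeHt hT b.2 := by rw [← hBht b hbB]; exact hσb.le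
    have hvle : v ≤ b.2 := hv ▸ restr_le hT b.2 σ
    have hvht : nodeHt hT v = σ := hv ▸ nodeHt_restr hT hσ2
    have hvrestr : ∀ α ≤ σ, restr hT v α = restr hT b.2 α := by
      intro α hα
      rw [← hv]
      exact restr_eq_restr hT (restr_le hT b.2 σ) (by rw [nodeHt_restr hT hσ2]; exact hα)
    constructor
    · -- b.1 <lex v
      have hne_uv : u ≠ v := by
        intro h
        have : restr hT u δ ≠ restr hT v δ := by
          rw [← hu, ← hv,
            restr_eq_restr hT (restr_le hT b.1 σ) (by rw [nodeHt_restr hT hσb.le]; exact hδσ.le),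
            restr_eq_restr hT (restr_le hT b.2 σ) (by rw [nodeHt_restr hT hσ2]; exact hδσ.le)]
          exact delta_mem hT hinc
        exact this (by rw [h])
      have hincv : Incomp b.1 v := by
        constructor
        · intro hle
          have := nodeHt_le_of_le hT hle
          rw [hvht] at this
          exact absurd hσb (not_lt_of_ge this)
        · intro hle
          exact hne_uv (hu.symm.trans (restr_eq_of_le hT hle hvht))
      have hδv : delta hT b.1 v = δ := by
        refine delta_eq_of hT ?_ ?_
        · rw [hvrestr δ hδσ.le]
          exact delta_mem hT hinc
        · intro α hα
          rw [hvrestr α (le_of_lt (lt_trans hα hδσ))]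
          exact restr_eq_of_lt_delta hT hα
      refine lexLT_of_incomp_delta hT hincv ?_
      rw [hδv, hvrestr δ hδσ.le]
      exact lo_of_lexLT_incomp hT hinc (hBlex b hbB)
    · -- v <lex b.2
      refine Or.inl (lt_of_le_of_ne hvle ?_)
      intro h
      rw [h] at hvht
      rw [← hBht b hbB] at hvht
      exact absurd hσb (not_lt_of_ge hvht.le)
  -- apply (c) to B₂
  obtain ⟨a, haB₂, b, hbB₂, hlt, hperp⟩ := hc B₂ hB₂c
    (fun a ha => hBlex a (hB₂sub ha))
    (fun a ha b hb hne => hBd a (hB₂sub ha) b (hB₂sub hb) hne) hsep t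
  refine ⟨a, hB₂sub haB₂, b, hB₂sub hbB₂, ?_, hperp⟩
  exact lt_of_le_of_lt (le_max_left _ _) (lt_of_lt_of_le hlt (min_le_left _ _))

end CtoB

section BtoA

variable {T : Type} [PartialOrder T] (hT : IsSetTree T) {lo : T → T → Prop}

/-- Implication (b) → (a). -/
theorem impl_b_a (h1 : IsOmega1Tree hT) (hlo : IsLevelOrderFamily hT lo)
    (hb : ∀ B : Set (T × T), NormalFamily hT lo B → ∀ t : Fin 2 → Bool,
      ∃ a ∈ B, ∃ b ∈ B, nodeHt hT a.1 < nodeHt hT b.1 ∧ tpPerp hT lo a b t) :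
    WeaklyBiEntangled hT lo := by
  intro A hAc hAlex hAd hAs
  by_contra hcon
  obtain ⟨c, hcsep⟩ := hAs
  set δc := nodeHt hT c with hδcdef
  have hδcω : δc < omega1 := h1.1 c
  haveI : Nonempty T := ⟨c⟩
  -- extract the "bad pair" function from the failure of weak bi-entangledness
  have hP : ∀ ξ, ξ < omega1 → ∃ (b : T × T) (t : Fin 2 → Bool),
      b ∈ A ∧ ξ ≤ nodeHt hT b.1 ∧ ξ ≤ nodeHt hT b.2 ∧
      ∀ a ∈ A, nodeHt hT a.1 < ξ → nodeHt hT a.2 < ξ → ¬ tpPerp hT lo a b t := by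
    intro ξ hξ
    by_contra hno
    push_neg at hno
    exact hcon ⟨ξ, hξ, fun b hb hb1 hb2 t => hno b t hb hb1 hb2⟩
  choose! bfun tfun hspec using hP
  set g : Ordinal → Ordinal :=
    fun x => max x (max (nodeHt hT (bfun x).1) (nodeHt hT (bfun x).2)) with hgdef
  set ξf : Ordinal → Ordinal := Ordinal.lt_wf.fix
    (fun β IH => max (δc + 1) (Ordinal.bsup.{0,0} β (fun γ hγ => g (IH γ hγ) + 1))) with hξfdef
  have hξeq : ∀ β, ξf β = max (δc + 1)
      (Ordinal.bsup.{0,0} β (fun γ _ => g (ξf γ) + 1)) := by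
    intro β
    exact WellFounded.fix_eq _ _ β
  have hξ1 : ∀ β, δc + 1 ≤ ξf β := fun β => by rw [hξeq]; exact le_max_left _ _
  have hmono : ∀ γ β, γ < β → g (ξf γ) + 1 ≤ ξf β := by
    intro γ β hγβ
    rw [hξeq β]
    exact le_trans (Ordinal.le_bsup _ γ hγβ) (le_max_right _ _)
  have hξlt : ∀ γ β, γ < β → ξf γ < ξf β := by
    intro γ β hγβ
    have : ξf γ ≤ g (ξf γ) := le_max_left _ _
    exact lt_of_le_of_lt this (lt_of_lt_of_le (lt_add_one _) (hmono γ β hγβ))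
  have hξω : ∀ β, β < omega1 → ξf β < omega1 := by
    intro β
    induction β using Ordinal.induction with
    | _ β IH =>
      intro hβ
      rw [hξeq]
      refine max_lt (omega1_isLimit.succ_lt hδcω) ?_
      refine bsup_lt_omega1 hβ ?_
      intro γ hγ
      have hγω : γ < omega1 := lt_trans hγ hβ
      have h1' : ξf γ < omega1 := IH γ hγ hγω
      have h2' : g (ξf γ) < omega1 :=
        max_lt h1' (max_lt (h1.1 _) (h1.1 _))
      exact omega1_isLimit.succ_lt h2'
  -- pigeonhole on the type of the bad pair
  obtain ⟨t₀, -, hUc⟩ := exists_uncountable_fiber (S := Set.Iio omega1)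
    not_countable_Iio_omega1 (fun β => tfun (ξf β)) (C := Set.univ)
    Set.countable_univ (fun x _ => Set.mem_univ _)
  set U := {β ∈ Set.Iio omega1 | tfun (ξf β) = t₀} with hUdef
  have hUnb : ∀ η, η < omega1 → ∃ β, β ∈ U ∧ η ≤ ξf β := by
    intro η hη
    by_contra hno
    push_neg at hno
    apply hUc
    refine Set.MapsTo.countable_of_injOn (f := ξf) (t := Set.Iio η) ?_ ?_
      (countable_Iio_ordinal hη)
    · intro β hβ
      exact hno β hβ
    · intro β hβ γ hγ hβγ
      by_contra hne
      rcases lt_or_gt_of_ne hne with h | h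
      · exact absurd hβγ (ne_of_lt (hξlt _ _ h))
      · exact absurd hβγ.symm (ne_of_lt (hξlt _ _ h))
  set αf : Ordinal → Ordinal := fun η => sInf {β | β ∈ U ∧ η ≤ ξf β} with hαfdef
  have hαmem : ∀ η, η < omega1 → αf η ∈ U ∧ η ≤ ξf (αf η) := by
    intro η hη
    exact csInf_mem (hUnb η hη)
  have hαmono : ∀ η θ, η ≤ θ → θ < omega1 → αf η ≤ αf θ := by
    intro η θ hηθ hθ
    refine csInf_le_csInf (OrderBot.bddBelow _) (hUnb θ hθ) ?_
    intro β hβ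
    exact ⟨hβ.1, le_trans hηθ hβ.2⟩
  set μ := δc + 1 with hμdef
  have hμω : μ < omega1 := omega1_isLimit.succ_lt hδcω
  set pair : Ordinal → T × T := fun η =>
    (restr hT (bfun (ξf (αf η))).1 η, restr hT (bfun (ξf (αf η))).2 η) with hpairdef
  -- key structural facts about each pair
  have key : ∀ η, μ ≤ η → η < omega1 →
      bfun (ξf (αf η)) ∈ A ∧
      nodeHt hT (pair η).1 = η ∧ nodeHt hT (pair η).2 = η ∧
      (pair η).1 ≤ (bfun (ξf (αf η))).1 ∧ (pair η).2 ≤ (bfun (ξf (αf η))).2 ∧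
      Incomp (pair η).1 (pair η).2 ∧
      delta hT (pair η).1 (pair η).2 ≤ δc ∧
      lexLT hT lo (pair η).1 (pair η).2 := by
    intro η hμη hηω
    obtain ⟨hαU, hαle⟩ := hαmem η hηω
    have hxω : ξf (αf η) < omega1 := hξω _ hαU.1
    obtain ⟨hbA, hb1, hb2, -⟩ := hspec _ hxω
    set b := bfun (ξf (αf η))
    have hδcb1 : δc < nodeHt hT b.1 :=
      lt_of_lt_of_le (lt_of_lt_of_le (lt_add_one δc) (le_trans hμη hαle)) hb1
    have hδcb2 : δc < nodeHt hT b.2 :=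
      lt_of_lt_of_le (lt_of_lt_of_le (lt_add_one δc) (le_trans hμη hαle)) hb2
    obtain ⟨hinc, hδle⟩ := sep_pair_struct hT hlo (hAlex b hbA)
      (hcsep b hbA).1 (hcsep b hbA).2 hδcb1 hδcb2
    have hδη : delta hT b.1 b.2 < η :=
      lt_of_le_of_lt hδle (lt_of_lt_of_le (lt_add_one δc) hμη)
    have hηb1 : η ≤ nodeHt hT b.1 := le_trans hαle hb1
    have hηb2 : η ≤ nodeHt hT b.2 := le_trans hαle hb2
    obtain ⟨ht1, ht2, hinc', hδ', hlex'⟩ := restr_pair hT (lo := lo) hinc hδη hηb1 hηb2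
    refine ⟨hbA, ht1, ht2, restr_le hT _ _, restr_le hT _ _, hinc', ?_, ?_⟩
    · rw [hδ']; exact hδle
    · exact hlex' (lo_of_lexLT_incomp hT hinc (hAlex b hbA))
  set B := {p : T × T | ∃ η, μ ≤ η ∧ η < omega1 ∧ p = pair η} with hBdef
  -- B is a normal family
  have hBht : ∀ p ∈ B, nodeHt hT p.1 = nodeHt hT p.2 := by
    rintro p ⟨η, hμη, hηω, rfl⟩
    rw [(key η hμη hηω).2.1, (key η hμη hηω).2.2.1]
  have hhtval : ∀ η, μ ≤ η → η < omega1 → nodeHt hT (pair η).1 = η := by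
    intro η hμη hηω
    exact (key η hμη hηω).2.1
  have hBc : ¬ B.Countable := by
    intro hcnt
    apply not_countable_Ico_omega1 hμω
    have : Set.Ico μ omega1 ⊆ (fun p : T × T => nodeHt hT p.1) '' B := by
      intro η hη
      exact ⟨pair η, ⟨η, hη.1, hη.2, rfl⟩, hhtval η hη.1 hη.2⟩
    exact Set.Countable.mono this (hcnt.image _)
  have hBlex : ∀ p ∈ B, lexLT hT lo p.1 p.2 := by
    rintro p ⟨η, hμη, hηω, rfl⟩
    exact (key η hμη hηω).2.2.2.2.2.2.2
  have hBd : PairwiseDisjointPairs B := by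
    rintro p ⟨η, hμη, hηω, rfl⟩ q ⟨θ, hμθ, hθω, rfl⟩ hpq
    have hηθ : η ≠ θ := by
      intro h
      exact hpq (by rw [h])
    obtain ⟨-, kp1, kp2, -⟩ := key η hμη hηω
    obtain ⟨-, kq1, kq2, -⟩ := key θ hμθ hθω
    refine ⟨?_, ?_, ?_, ?_⟩ <;> intro h
    · exact hηθ (by rw [← kp1, h, kq1])
    · exact hηθ (by rw [← kp1, h, kq2])
    · exact hηθ (by rw [← kp2, h, kq1])
    · exact hηθ (by rw [← kp2, h, kq2])
  have hhtset : {α : Ordinal | ∃ p ∈ B, α = nodeHt hT p.1} = Set.Ico μ omega1 := by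
    ext α
    constructor
    · rintro ⟨p, ⟨η, hμη, hηω, rfl⟩, rfl⟩
      rw [hhtval η hμη hηω]
      exact ⟨hμη, hηω⟩
    · rintro ⟨hμα, hαω⟩
      exact ⟨pair α, ⟨α, hμα, hαω, rfl⟩, (hhtval α hμα hαω).symm⟩
  have hinfht : sInf {α : Ordinal | ∃ p ∈ B, α = nodeHt hT p.1} = μ := by
    rw [hhtset]
    refine le_antisymm (csInf_le (OrderBot.bddBelow _) ⟨le_rfl, hμω⟩) ?_
    exact le_csInf ⟨μ, le_rfl, hμω⟩ (fun b hb => hb.1)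
  have hΔbd : ∀ α ∈ {α : Ordinal | ∃ p ∈ B, α = delta hT p.1 p.2}, α ≤ δc := by
    rintro α ⟨p, ⟨η, hμη, hηω, rfl⟩, rfl⟩
    exact (key η hμη hηω).2.2.2.2.2.2.1
  have hΔne : {α : Ordinal | ∃ p ∈ B, α = delta hT p.1 p.2}.Nonempty :=
    ⟨delta hT (pair μ).1 (pair μ).2, pair μ, ⟨μ, le_rfl, hμω, rfl⟩, rfl⟩
  have hNormal : NormalFamily hT lo B := by
    refine ⟨hBc, hBlex, hBd, hBht, ⟨δc, hΔbd⟩, ?_, ?_⟩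
    · rw [hinfht]
      exact lt_of_le_of_lt (csSup_le hΔne hΔbd) (lt_add_one _)
    · rw [hinfht, hhtset]
      ext α
      simp [Set.mem_Ico]
  -- apply (b) to B with type t₀ and transfer back
  obtain ⟨p, hpB, q, hqB, hplt, hperp⟩ := hb B hNormal t₀
  obtain ⟨η, hμη, hηω, rfl⟩ := hpB
  obtain ⟨θ, hμθ, hθω, rfl⟩ := hqB
  obtain ⟨hb1A, kp1, kp2, kple1, kple2, -⟩ := key η hμη hηω
  obtain ⟨hb2A, kq1, kq2, kqle1, kqle2, -⟩ := key θ hμθ hθω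
  rw [kp1, kq1] at hplt
  have hαlt : αf η < αf θ := by
    rcases lt_or_eq_of_le (hαmono η θ hplt.le hθω) with h | h
    · exact h
    · exfalso
      have hθle : θ ≤ nodeHt hT (bfun (ξf (αf θ))).1 :=
        le_trans (hαmem θ hθω).2 (hspec _ (hξω _ (hαmem θ hθω).1.1)).2.1
      have hcomp : (pair η).1 ≤ (pair θ).1 := by
        show restr hT (bfun (ξf (αf η))).1 η ≤ restr hT (bfun (ξf (αf θ))).1 θ
        rw [h]
        exact restr_mono hT hplt.le hθle
      exact hperp.1.1 hcomp
  -- heights of the first bad pair are below the threshold of the second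
  have hx2ω : ξf (αf θ) < omega1 := hξω _ (hαmem θ hθω).1.1
  have hhts : nodeHt hT (bfun (ξf (αf η))).1 < ξf (αf θ) ∧
      nodeHt hT (bfun (ξf (αf η))).2 < ξf (αf θ) := by
    have h' := hmono _ _ hαlt
    constructor
    · exact lt_of_le_of_lt (le_trans (le_max_left _ _) (le_max_right _ _))
        (lt_of_lt_of_le (lt_add_one _) h')
    · exact lt_of_le_of_lt (le_trans (le_max_right _ _) (le_max_right _ _))
        (lt_of_lt_of_le (lt_add_one _) h')
  have htrans : tpPerp hT lo (bfun (ξf (αf η))) (bfun (ξf (αf θ))) t₀ :=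
    tpPerp_extend hT hperp kple1 kple2 kqle1 kqle2
  have ht₀ : tfun (ξf (αf θ)) = t₀ := (hαmem θ hθω).1.2
  have hbad := (hspec _ hx2ω).2.2.2
  rw [ht₀] at hbad
  exact hbad _ hb1A hhts.1 hhts.2 htrans

end BtoA

/-- Lemma (equivalent formulations of weak bi-entangledness):
(a) `T` is weakly bi-entangled;
(b) for every normal family `B ⊆ [T]²` and every type `t` there are `a, b ∈ B` with
    `ht(a) < ht(b)` and `tp⊥(a,b) = t`;
(c) for every uncountable pairwise disjoint separated family `A ⊆ [T]²` and every type `t`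
    there are `a, b ∈ A` with `max(ht(a(0)),ht(a(1))) < min(ht(b(0)),ht(b(1)))`
    and `tp⊥(a,b) = t`. -/
theorem weaklyBiEntangled_equivalences {T : Type} [PartialOrder T]
    (hT : IsSetTree T) (lo : T → T → Prop) (hlo : IsLevelOrderFamily hT lo)
    (hAron : IsAronszajnTree hT) :
    (WeaklyBiEntangled hT lo ↔
      (∀ B : Set (T × T), NormalFamily hT lo B → ∀ t : Fin 2 → Bool,
        ∃ a ∈ B, ∃ b ∈ B, nodeHt hT a.1 < nodeHt hT b.1 ∧ tpPerp hT lo a b t)) ∧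
    ((∀ B : Set (T × T), NormalFamily hT lo B → ∀ t : Fin 2 → Bool,
        ∃ a ∈ B, ∃ b ∈ B, nodeHt hT a.1 < nodeHt hT b.1 ∧ tpPerp hT lo a b t) ↔
      (∀ A : Set (T × T), ¬ A.Countable →
        (∀ a ∈ A, lexLT hT lo a.1 a.2) →
        PairwiseDisjointPairs A → SeparatedPairs (lexLT hT lo) A →
        ∀ t : Fin 2 → Bool,
          ∃ a ∈ A, ∃ b ∈ A,
            max (nodeHt hT a.1) (nodeHt hT a.2) < min (nodeHt hT b.1) (nodeHt hT b.2) ∧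
            tpPerp hT lo a b t)) := by
  have hO := hAron.1
  refine ⟨⟨fun ha => impl_c_b hT hO (impl_a_c hT hO ha),
    fun hbb => impl_b_a hT hO hlo hbb⟩,
    ⟨fun hbb => impl_a_c hT hO (impl_b_a hT hO hlo hbb),
    fun hcc => impl_c_b hT hO hcc⟩⟩

end
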